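/- For the E(2) Kähler–Einstein ODE system, the function c² - a² satisfies (c² - a²)' = -(c² - a²)(c² + a²) + 2a²b²c². Consequently, if c(t₀)² - a(t₀)² ≥ 0 and the solution exists on [t₀, t₁] with a, b, c positive, then the set where c² - a² < 0 is invariant backwards in time: if c² - a² < 0 at some point, it remains negative for all earlier times in the solution interval. -/

import Mathlib

/-- For the E(2) Kähler–Einstein ODE system, (c²-a²)' = -(c²-a²)(c²+a²) + 2a²b²c², and
the set where c² - a² < 0 is invariant backwards in time. -/
theorem stmt_4 (a b c : ℝ → ℝ) (ξ η : ℝ) (I : Set ℝ) (hI : I = Set.Ioo ξ η)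
    (hpos : ∀ t ∈ I, 0 < a t ∧ 0 < b t ∧ 0 < c t)
    (ha : ∀ t ∈ I, HasDerivAt a (a t / 2 * (-(a t) ^ 2 + (c t) ^ 2)) t)
    (hb : ∀ t ∈ I, HasDerivAt b (b t / 2 * ((a t) ^ 2 + (c t) ^ 2)) t)
    (hc : ∀ t ∈ I, HasDerivAt c (c t / 2 * ((a t) ^ 2 - (c t) ^ 2 + 2 * (a t) ^ 2 * (b t) ^ 2)) t) :
    (∀ t ∈ I, HasDerivAt (fun s => (c s) ^ 2 - (a s) ^ 2)
      (-((c t) ^ 2 - (a t) ^ 2) * ((c t) ^ 2 + (a t) ^ 2) + 2 * (a t) ^ 2 * (b t) ^ 2 * (c t) ^ 2) t) ∧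
    (∀ t₁ ∈ I, (c t₁) ^ 2 - (a t₁) ^ 2 < 0 →
      ∀ t ∈ I, t ≤ t₁ → (c t) ^ 2 - (a t) ^ 2 < 0) := by
  set f : ℝ → ℝ := fun s => (c s) ^ 2 - (a s) ^ 2 with hf
  have hderiv : ∀ t ∈ I, HasDerivAt f
      (-((c t) ^ 2 - (a t) ^ 2) * ((c t) ^ 2 + (a t) ^ 2)
        + 2 * (a t) ^ 2 * (b t) ^ 2 * (c t) ^ 2) t := by
    intro t ht
    have h := ((hc t ht).pow 2).sub ((ha t ht).pow 2)
    rw [show f = c ^ 2 - a ^ 2 from rfl]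
    refine h.congr_deriv ?_
    norm_num
    ring
  refine ⟨hderiv, ?_⟩
  intro t₁ ht₁ hneg t ht hle
  by_contra hge
  push_neg at hge
  have hIcc : Set.Icc t t₁ ⊆ I := by
    rw [hI] at ht ht₁ ⊢
    exact fun u hu => ⟨lt_of_lt_of_le ht.1 hu.1, lt_of_le_of_lt hu.2 ht₁.2⟩
  have hcont : ContinuousOn f (Set.Icc t t₁) := fun u hu =>
    (hderiv u (hIcc hu)).continuousAt.continuousWithinAt
  have hlt : t < t₁ := lt_of_le_of_ne hle (by rintro rfl; linarith)
  have hzero : (0 : ℝ) ∈ f '' Set.Icc t t₁ :=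
    intermediate_value_Icc' hle hcont ⟨le_of_lt hneg, hge⟩
  set S : Set ℝ := Set.Icc t t₁ ∩ f ⁻¹' {0} with hS
  have hSne : S.Nonempty := by
    obtain ⟨u, hu, hfu⟩ := hzero
    exact ⟨u, hu, hfu⟩
  have hScl : IsClosed S := hcont.preimage_isClosed_of_isClosed isClosed_Icc isClosed_singleton
  have hScomp : IsCompact S := isCompact_Icc.of_isClosed_subset hScl Set.inter_subset_left
  set s := sSup S with hs
  have hsS : s ∈ S := hScomp.sSup_mem hSne
  have hfs : f s = 0 := hsS.2
  have hsIcc : s ∈ Set.Icc t t₁ := hsS.1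
  have hsI : s ∈ I := hIcc hsIcc
  have hslt : s < t₁ := by
    rcases lt_or_eq_of_le hsIcc.2 with h | h
    · exact h
    · exfalso
      rw [h] at hfs
      have : c t₁ ^ 2 - a t₁ ^ 2 = 0 := hfs
      linarith
  -- f is negative on (s, t₁)
  have hnegOn : ∀ u ∈ Set.Ioo s t₁, f u < 0 := by
    intro u hu
    have huI : u ∈ Set.Icc t t₁ := ⟨le_trans hsIcc.1 (le_of_lt hu.1), le_of_lt hu.2⟩
    rcases lt_trichotomy (f u) 0 with h | h | h
    · exact h
    · exfalso
      have : u ≤ s := le_csSup hScomp.bddAbove ⟨huI, h⟩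
      linarith [hu.1]
    · -- IVT gives a zero in [u, t₁], contradicting sSup
      have hsub : Set.Icc u t₁ ⊆ Set.Icc t t₁ := Set.Icc_subset_Icc huI.1 le_rfl
      have : (0 : ℝ) ∈ f '' Set.Icc u t₁ :=
        intermediate_value_Icc' (le_of_lt hu.2) (hcont.mono hsub) ⟨le_of_lt hneg, le_of_lt h⟩
      obtain ⟨w, hw, hfw⟩ := this
      have hwS : w ∈ S := ⟨hsub hw, hfw⟩
      have : w ≤ s := le_csSup hScomp.bddAbove hwS
      linarith [hw.1, hu.1]
  -- derivative at s is positive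
  obtain ⟨hap, hbp, hcp⟩ := hpos s hsI
  have hD : (0:ℝ) < -((c s) ^ 2 - (a s) ^ 2) * ((c s) ^ 2 + (a s) ^ 2)
      + 2 * (a s) ^ 2 * (b s) ^ 2 * (c s) ^ 2 := by
    have : (c s) ^ 2 - (a s) ^ 2 = 0 := hfs
    rw [this]
    positivity
  have hd := hderiv s hsI
  rw [hasDerivAt_iff_tendsto_slope] at hd
  have hev : ∀ᶠ u in nhdsWithin s {s}ᶜ, 0 < slope f s u :=
    hd.eventually (eventually_gt_nhds hD)
  have hev' : ∀ᶠ u in nhdsWithin s (Set.Ioi s), 0 < slope f s u :=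
    hev.filter_mono (nhdsWithin_mono s fun u hu => ne_of_gt hu)
  have hmem : Set.Ioo s t₁ ∈ nhdsWithin s (Set.Ioi s) :=
    Ioo_mem_nhdsGT_of_mem ⟨le_rfl, hslt⟩
  obtain ⟨u, hus, huIoo⟩ := (hev'.and (Filter.eventually_of_mem hmem fun u hu => hu)).exists
  have hupos : 0 < f u := by
    have h1 : 0 < u - s := sub_pos.mpr huIoo.1
    have hsl : 0 < (f u - f s) / (u - s) := by rwa [slope_def_field] at hus
    have h2 : 0 < f u - f s := by
      have := mul_pos hsl h1
      rwa [div_mul_cancel₀ _ (ne_of_gt h1)] at this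
    linarith [hfs]
  linarith [hnegOn u huIoo]
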